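/- Let n ≥ 1. There exists a constant C > 0 such that for all n×n complex matrices X, Y, D with ‖X‖ ≤ 1, ‖Y‖ ≤ 1 and ‖D‖ ≤ 1, one has ‖exp(X) * exp(Y) * exp(−X − Y + D) − (𝟙 + D + (1/2) • (X*Y − Y*X))‖ ≤ C · ((‖X‖ + ‖Y‖)³ + (‖X‖ + ‖Y‖)·‖D‖ + ‖D‖²). (This is the expansion F_f^s(A) = 𝟙 + J_f^s(𝓕^s(A)) + O(A³ + A dA) of the discrete spatial curvature of a triangular face: with edge values X = A_{e₁}, Y = A_{e₂} and A_{e₃} = −A_{e₁} − A_{e₂} + (dA)_f = −X − Y + D, the holonomy around the face agrees with 𝟙 plus the interpolated curvature D + ½[X,Y] up to the stated error.) -/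

import Mathlib

open scoped Matrix.Norms.L2Operator Nat

set_option maxHeartbeats 1000000

section aux
variable {𝔸 : Type*} [NormedRing 𝔸] [NormedAlgebra ℂ 𝔸] [NormOneClass 𝔸]

lemma my_norm_exp_le (x : 𝔸) : ‖NormedSpace.exp x‖ ≤ Real.exp ‖x‖ := by
  rw [NormedSpace.exp_eq_tsum ℂ]
  have hs : Summable fun m : ℕ => ‖((m ! : ℂ))⁻¹ • x ^ m‖ :=
    NormedSpace.norm_expSeries_summable' x
  refine (norm_tsum_le_tsum_norm hs).trans ?_
  have hexp : Real.exp ‖x‖ = ∑' m : ℕ, ‖x‖ ^ m / m ! := by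
    rw [Real.exp_eq_exp_ℝ, NormedSpace.exp_eq_tsum_div]
  rw [hexp]
  refine Summable.tsum_le_tsum (fun m => ?_) hs (Real.summable_pow_div_factorial ‖x‖)
  rw [norm_smul]
  simp only [norm_inv, Complex.norm_natCast]
  rw [div_eq_inv_mul]
  gcongr
  exact norm_pow_le x m

variable [CompleteSpace 𝔸]

lemma exp_remainder_bound (x : 𝔸) :
    ‖NormedSpace.exp x - (1 + x + (2:ℂ)⁻¹ • (x * x))‖ ≤ ‖x‖ ^ 3 * Real.exp ‖x‖ := by
  set f : ℕ → 𝔸 := fun m => ((m ! : ℂ))⁻¹ • x ^ m with hf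
  have hs : Summable f := NormedSpace.expSeries_summable' (𝕂 := ℂ) x
  have key : (∑ i ∈ Finset.range 3, f i) + ∑' i, f (i + 3) = ∑' i, f i :=
    Summable.sum_add_tsum_nat_add 3 hs
  have hexp : NormedSpace.exp x = ∑' i, f i := by
    rw [NormedSpace.exp_eq_tsum ℂ]
  have hrange : ∑ i ∈ Finset.range 3, f i = 1 + x + (2:ℂ)⁻¹ • (x * x) := by
    simp [hf, Finset.sum_range_succ, Nat.factorial, pow_succ]
  have hdiff : NormedSpace.exp x - (1 + x + (2:ℂ)⁻¹ • (x * x)) = ∑' i, f (i + 3) := by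
    rw [hexp, ← key, hrange]; abel
  rw [hdiff]
  have hsn : Summable fun i : ℕ => ‖f (i + 3)‖ :=
    (summable_nat_add_iff 3).mpr (NormedSpace.norm_expSeries_summable' (𝕂 := ℂ) x)
  refine (norm_tsum_le_tsum_norm hsn).trans ?_
  have hterm : ∀ i : ℕ, ‖f (i + 3)‖ ≤ ‖x‖ ^ 3 * (‖x‖ ^ i / i !) := by
    intro i
    rw [hf]
    simp only [norm_smul, norm_inv, Complex.norm_natCast]
    have h1 : ‖x ^ (i + 3)‖ ≤ ‖x‖ ^ (i + 3) := norm_pow_le x _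
    have h2 : (((i + 3)! : ℝ))⁻¹ ≤ ((i ! : ℝ))⁻¹ := by
      apply inv_anti₀
      · positivity
      · exact_mod_cast Nat.factorial_le (Nat.le_add_right i 3)
    calc (((i + 3)! : ℝ))⁻¹ * ‖x ^ (i + 3)‖ ≤ ((i ! : ℝ))⁻¹ * ‖x‖ ^ (i + 3) := by
          apply mul_le_mul h2 h1 (norm_nonneg _) (by positivity)
      _ = ‖x‖ ^ 3 * (‖x‖ ^ i / i !) := by rw [pow_add]; ring
  have hsg : Summable fun i : ℕ => ‖x‖ ^ 3 * (‖x‖ ^ i / i !) :=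
    (Real.summable_pow_div_factorial ‖x‖).mul_left _
  refine (Summable.tsum_le_tsum hterm hsn hsg).trans (le_of_eq ?_)
  rw [tsum_mul_left, Real.exp_eq_exp_ℝ, NormedSpace.exp_eq_tsum_div]

end aux

section alg
variable {𝔸 : Type*} [Ring 𝔸] [Algebra ℂ 𝔸]

/-- Linear-plus-quadratic part of `exp`. -/
noncomputable def Lq (a : 𝔸) : 𝔸 := a + (2:ℂ)⁻¹ • (a * a)

/-- Quadratic Taylor polynomial of `exp`. -/
noncomputable def Pq (a : 𝔸) : 𝔸 := 1 + Lq a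

/-- Higher-order part of `Lq a * Lq b`. -/
noncomputable def Eq2 (a b : 𝔸) : 𝔸 :=
  a * ((2:ℂ)⁻¹ • (b * b)) + ((2:ℂ)⁻¹ • (a * a)) * b +
    ((2:ℂ)⁻¹ • (a * a)) * ((2:ℂ)⁻¹ • (b * b))

lemma Pq_def' (a : 𝔸) : Pq a = 1 + a + (2:ℂ)⁻¹ • (a * a) := by
  unfold Pq Lq; rw [add_assoc]

lemma Pq_mul3 (x y z : 𝔸) : Pq x * Pq y * Pq z =
    1 + (Lq x + Lq y + Lq z) + (Lq x * Lq y + Lq x * Lq z + Lq y * Lq z) +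
      Lq x * Lq y * Lq z := by
  unfold Pq; noncomm_ring

lemma Lq_mul (a b : 𝔸) : Lq a * Lq b = a * b + Eq2 a b := by
  unfold Lq Eq2
  simp only [mul_add, add_mul]
  abel

lemma key_expand (x y D : 𝔸) :
    Pq x * Pq y * Pq (-x - y + D) - (1 + D + (2:ℂ)⁻¹ • (x * y - y * x)) =
      (2:ℂ)⁻¹ • (x * D + y * D - D * x - D * y) + (2:ℂ)⁻¹ • (D * D)
        + Eq2 x y + Eq2 x (-x - y + D) + Eq2 y (-x - y + D)
        + Lq x * Lq y * Lq (-x - y + D) := by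
  set z : 𝔸 := -x - y + D with hz
  have hW : D = x + y + z := by rw [hz]; abel
  rw [Pq_mul3, Lq_mul x y, Lq_mul x z, Lq_mul y z, hW]
  set T := Lq x * Lq y * Lq z
  set E1 := Eq2 x y
  set E2 := Eq2 x z
  set E3 := Eq2 y z
  unfold Lq
  simp only [mul_add, add_mul, smul_add, smul_sub, sub_mul, mul_sub]
  module

end alg

section bounds
variable {𝔸 : Type*} [NormedRing 𝔸] [NormedAlgebra ℂ 𝔸] [NormOneClass 𝔸]

lemma norm_half_smul (a : 𝔸) : ‖(2:ℂ)⁻¹ • a‖ = 2⁻¹ * ‖a‖ := by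
  rw [norm_smul, norm_inv]
  norm_num

lemma norm_Lq_le {a : 𝔸} {t : ℝ} (ha : ‖a‖ ≤ t) (ht : t ≤ 3) : ‖Lq a‖ ≤ 5 / 2 * t := by
  have h0 : (0:ℝ) ≤ ‖a‖ := norm_nonneg a
  have hmul : ‖a * a‖ ≤ ‖a‖ * ‖a‖ := norm_mul_le a a
  calc ‖Lq a‖ ≤ ‖a‖ + ‖(2:ℂ)⁻¹ • (a * a)‖ := norm_add_le _ _
    _ = ‖a‖ + 2⁻¹ * ‖a * a‖ := by rw [norm_half_smul]
    _ ≤ 5 / 2 * t := by nlinarith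

lemma norm_Eq2_le {a b : 𝔸} {t : ℝ} (ha : ‖a‖ ≤ t) (hb : ‖b‖ ≤ t) (ht : t ≤ 3) :
    ‖Eq2 a b‖ ≤ 2 * t ^ 3 := by
  have h0a : (0:ℝ) ≤ ‖a‖ := norm_nonneg a
  have h0b : (0:ℝ) ≤ ‖b‖ := norm_nonneg b
  have h0t : (0:ℝ) ≤ t := h0a.trans ha
  have haa : ‖a * a‖ ≤ ‖a‖ * ‖a‖ := norm_mul_le a a
  have hbb : ‖b * b‖ ≤ ‖b‖ * ‖b‖ := norm_mul_le b b
  have k1 : ‖a * ((2:ℂ)⁻¹ • (b * b))‖ ≤ ‖a‖ * (2⁻¹ * (‖b‖ * ‖b‖)) := by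
    refine (norm_mul_le _ _).trans ?_
    rw [norm_half_smul]
    gcongr
  have k2 : ‖((2:ℂ)⁻¹ • (a * a)) * b‖ ≤ 2⁻¹ * (‖a‖ * ‖a‖) * ‖b‖ := by
    refine (norm_mul_le _ _).trans ?_
    rw [norm_half_smul]
    gcongr
  have k3 : ‖((2:ℂ)⁻¹ • (a * a)) * ((2:ℂ)⁻¹ • (b * b))‖ ≤
      2⁻¹ * (‖a‖ * ‖a‖) * (2⁻¹ * (‖b‖ * ‖b‖)) := by
    refine (norm_mul_le _ _).trans ?_
    rw [norm_half_smul, norm_half_smul]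
    gcongr
  calc ‖Eq2 a b‖ ≤ ‖a * ((2:ℂ)⁻¹ • (b * b))‖ + ‖((2:ℂ)⁻¹ • (a * a)) * b‖ +
        ‖((2:ℂ)⁻¹ • (a * a)) * ((2:ℂ)⁻¹ • (b * b))‖ := norm_add₃_le
    _ ≤ ‖a‖ * (2⁻¹ * (‖b‖ * ‖b‖)) + 2⁻¹ * (‖a‖ * ‖a‖) * ‖b‖ +
        2⁻¹ * (‖a‖ * ‖a‖) * (2⁻¹ * (‖b‖ * ‖b‖)) := by
      exact add_le_add (add_le_add k1 k2) k3
    _ ≤ 2 * t ^ 3 := by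
      have q2 : ‖a‖ * ‖a‖ ≤ t * t := mul_le_mul ha ha h0a h0t
      have q3 : ‖b‖ * ‖b‖ ≤ t * t := mul_le_mul hb hb h0b h0t
      have c1 : ‖a‖ * (‖b‖ * ‖b‖) ≤ t * (t * t) :=
        mul_le_mul ha q3 (by positivity) h0t
      have c2 : ‖a‖ * ‖a‖ * ‖b‖ ≤ t * t * t :=
        mul_le_mul q2 hb h0b (by positivity)
      have c3 : ‖a‖ * ‖a‖ * (‖b‖ * ‖b‖) ≤ t * t * (t * t) :=
        mul_le_mul q2 q3 (by positivity) (by positivity)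
      have c4 : t * t * (t * t) ≤ 3 * (t * (t * t)) := by
        have h3 : (0:ℝ) ≤ t * (t * t) := by positivity
        nlinarith [mul_le_mul_of_nonneg_right ht h3]
      nlinarith

lemma norm_Pq_le {a : 𝔸} (ha : ‖a‖ ≤ 1) : ‖Pq a‖ ≤ 3 := by
  have h0 : (0:ℝ) ≤ ‖a‖ := norm_nonneg a
  have hmul : ‖a * a‖ ≤ ‖a‖ * ‖a‖ := norm_mul_le a a
  rw [Pq_def']
  calc ‖(1:𝔸) + a + (2:ℂ)⁻¹ • (a * a)‖ ≤ ‖(1:𝔸)‖ + ‖a‖ + ‖(2:ℂ)⁻¹ • (a * a)‖ := norm_add₃_le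
    _ = 1 + ‖a‖ + 2⁻¹ * ‖a * a‖ := by rw [norm_one, norm_half_smul]
    _ ≤ 3 := by nlinarith

lemma norm_mul3_le (a b c : 𝔸) : ‖a * b * c‖ ≤ ‖a‖ * ‖b‖ * ‖c‖ :=
  (norm_mul_le _ _).trans (mul_le_mul_of_nonneg_right (norm_mul_le a b) (norm_nonneg c))

end bounds

section abstractmain
variable {𝔸 : Type*} [NormedRing 𝔸] [NormedAlgebra ℂ 𝔸] [NormOneClass 𝔸] [CompleteSpace 𝔸]

theorem abstract_main (X Y D : 𝔸) (hX : ‖X‖ ≤ 1) (hY : ‖Y‖ ≤ 1) (hD : ‖D‖ ≤ 1) :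
    ‖NormedSpace.exp X * NormedSpace.exp Y * NormedSpace.exp (-X - Y + D) -
        (1 + D + ((1 : ℂ) / 2) • (X * Y - Y * X))‖ ≤
      1000000 * ((‖X‖ + ‖Y‖) ^ 3 + (‖X‖ + ‖Y‖) * ‖D‖ + ‖D‖ ^ 2) := by
  rw [one_div]
  have he1 : Real.exp 1 ≤ 3 := by
    have := Real.exp_one_lt_d9
    linarith
  have he3 : Real.exp 3 ≤ 27 := by
    have h : Real.exp 3 = Real.exp 1 ^ (3:ℕ) := by
      rw [← Real.exp_nat_mul]; norm_num
    rw [h]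
    calc Real.exp 1 ^ (3:ℕ) ≤ 3 ^ (3:ℕ) := by gcongr
      _ = 27 := by norm_num
  set Z : 𝔸 := -X - Y + D with hZ
  have h0X : (0:ℝ) ≤ ‖X‖ := norm_nonneg X
  have h0Y : (0:ℝ) ≤ ‖Y‖ := norm_nonneg Y
  have h0D : (0:ℝ) ≤ ‖D‖ := norm_nonneg D
  have hZnorm : ‖Z‖ ≤ (‖X‖ + ‖Y‖) + ‖D‖ := by
    have hrw : Z = D - (X + Y) := by rw [hZ]; abel
    rw [hrw]
    calc ‖D - (X + Y)‖ ≤ ‖D‖ + ‖X + Y‖ := norm_sub_le _ _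
      _ ≤ ‖D‖ + (‖X‖ + ‖Y‖) := by gcongr; exact norm_add_le X Y
      _ = (‖X‖ + ‖Y‖) + ‖D‖ := by ring
  have hXt : ‖X‖ ≤ (‖X‖ + ‖Y‖) + ‖D‖ := by linarith
  have hYt : ‖Y‖ ≤ (‖X‖ + ‖Y‖) + ‖D‖ := by linarith
  have ht3 : (‖X‖ + ‖Y‖) + ‖D‖ ≤ 3 := by linarith
  have hZ3 : ‖Z‖ ≤ 3 := hZnorm.trans ht3
  -- exp bounds
  have heY : ‖NormedSpace.exp Y‖ ≤ 3 :=
    (my_norm_exp_le Y).trans ((Real.exp_le_exp.mpr hY).trans he1)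
  have heZ : ‖NormedSpace.exp Z‖ ≤ 27 :=
    (my_norm_exp_le Z).trans ((Real.exp_le_exp.mpr hZ3).trans he3)
  -- remainder bounds
  have hRX : ‖NormedSpace.exp X - Pq X‖ ≤ 3 * ‖X‖ ^ 3 := by
    rw [Pq_def']
    refine (exp_remainder_bound X).trans ?_
    rw [mul_comm]
    have h1 : Real.exp ‖X‖ ≤ 3 := (Real.exp_le_exp.mpr hX).trans he1
    have h2 : (0:ℝ) ≤ ‖X‖ ^ 3 := by positivity
    exact mul_le_mul_of_nonneg_right h1 h2
  have hRY : ‖NormedSpace.exp Y - Pq Y‖ ≤ 3 * ‖Y‖ ^ 3 := by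
    rw [Pq_def']
    refine (exp_remainder_bound Y).trans ?_
    rw [mul_comm]
    have h1 : Real.exp ‖Y‖ ≤ 3 := (Real.exp_le_exp.mpr hY).trans he1
    have h2 : (0:ℝ) ≤ ‖Y‖ ^ 3 := by positivity
    exact mul_le_mul_of_nonneg_right h1 h2
  have hRZ : ‖NormedSpace.exp Z - Pq Z‖ ≤ 27 * ((‖X‖ + ‖Y‖) + ‖D‖) ^ 3 := by
    rw [Pq_def']
    refine (exp_remainder_bound Z).trans ?_
    have h1 : Real.exp ‖Z‖ ≤ 27 := (Real.exp_le_exp.mpr hZ3).trans he3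
    have h2 : ‖Z‖ ^ 3 ≤ ((‖X‖ + ‖Y‖) + ‖D‖) ^ 3 := by gcongr
    calc ‖Z‖ ^ 3 * Real.exp ‖Z‖ ≤ ((‖X‖ + ‖Y‖) + ‖D‖) ^ 3 * 27 := by
          exact mul_le_mul h2 h1 (Real.exp_pos _).le (by positivity)
      _ = 27 * ((‖X‖ + ‖Y‖) + ‖D‖) ^ 3 := by ring
  have hPX : ‖Pq X‖ ≤ 3 := norm_Pq_le hX
  have hPY : ‖Pq Y‖ ≤ 3 := norm_Pq_le hY
  -- splitting identity
  have hsplit : NormedSpace.exp X * NormedSpace.exp Y * NormedSpace.exp Z -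
      Pq X * Pq Y * Pq Z =
      (NormedSpace.exp X - Pq X) * (NormedSpace.exp Y * NormedSpace.exp Z) +
        Pq X * ((NormedSpace.exp Y - Pq Y) * NormedSpace.exp Z) +
        Pq X * Pq Y * (NormedSpace.exp Z - Pq Z) := by
    noncomm_ring
  have hpart1 : ‖NormedSpace.exp X * NormedSpace.exp Y * NormedSpace.exp Z -
      Pq X * Pq Y * Pq Z‖ ≤
      243 * ‖X‖ ^ 3 + 243 * ‖Y‖ ^ 3 + 243 * ((‖X‖ + ‖Y‖) + ‖D‖) ^ 3 := by
    rw [hsplit]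
    have b1 : ‖(NormedSpace.exp X - Pq X) * (NormedSpace.exp Y * NormedSpace.exp Z)‖ ≤
        243 * ‖X‖ ^ 3 := by
      refine (norm_mul_le _ _).trans ?_
      have hYZ : ‖NormedSpace.exp Y * NormedSpace.exp Z‖ ≤ 81 := by
        refine (norm_mul_le _ _).trans ?_
        calc ‖NormedSpace.exp Y‖ * ‖NormedSpace.exp Z‖ ≤ 3 * 27 :=
              mul_le_mul heY heZ (norm_nonneg _) (by norm_num)
          _ = 81 := by norm_num
      calc ‖NormedSpace.exp X - Pq X‖ * ‖NormedSpace.exp Y * NormedSpace.exp Z‖ ≤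
            (3 * ‖X‖ ^ 3) * 81 := mul_le_mul hRX hYZ (norm_nonneg _) (by positivity)
        _ = 243 * ‖X‖ ^ 3 := by ring
    have b2 : ‖Pq X * ((NormedSpace.exp Y - Pq Y) * NormedSpace.exp Z)‖ ≤
        243 * ‖Y‖ ^ 3 := by
      refine (norm_mul_le _ _).trans ?_
      have hin : ‖(NormedSpace.exp Y - Pq Y) * NormedSpace.exp Z‖ ≤ (3 * ‖Y‖ ^ 3) * 27 := by
        refine (norm_mul_le _ _).trans ?_
        exact mul_le_mul hRY heZ (norm_nonneg _) (by positivity)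
      calc ‖Pq X‖ * ‖(NormedSpace.exp Y - Pq Y) * NormedSpace.exp Z‖ ≤
            3 * ((3 * ‖Y‖ ^ 3) * 27) := mul_le_mul hPX hin (norm_nonneg _) (by norm_num)
        _ = 243 * ‖Y‖ ^ 3 := by ring
    have b3 : ‖Pq X * Pq Y * (NormedSpace.exp Z - Pq Z)‖ ≤
        243 * ((‖X‖ + ‖Y‖) + ‖D‖) ^ 3 := by
      refine (norm_mul3_le _ _ _).trans ?_
      calc ‖Pq X‖ * ‖Pq Y‖ * ‖NormedSpace.exp Z - Pq Z‖ ≤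
            3 * 3 * (27 * ((‖X‖ + ‖Y‖) + ‖D‖) ^ 3) := by
            refine mul_le_mul (mul_le_mul hPX hPY (norm_nonneg _) (by norm_num)) hRZ
              (norm_nonneg _) (by norm_num)
        _ = 243 * ((‖X‖ + ‖Y‖) + ‖D‖) ^ 3 := by ring
    exact norm_add₃_le.trans (add_le_add (add_le_add b1 b2) b3)
  -- second part via the key algebraic expansion
  have hkey := key_expand X Y D
  rw [← hZ] at hkey
  have n1 : ‖(2:ℂ)⁻¹ • (X * D + Y * D - D * X - D * Y)‖ ≤ (‖X‖ + ‖Y‖) * ‖D‖ := by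
    rw [norm_half_smul]
    have i1 : ‖X * D + Y * D - D * X - D * Y‖ ≤
        ‖X‖ * ‖D‖ + ‖Y‖ * ‖D‖ + ‖D‖ * ‖X‖ + ‖D‖ * ‖Y‖ := by
      calc ‖X * D + Y * D - D * X - D * Y‖ ≤ ‖X * D + Y * D - D * X‖ + ‖D * Y‖ :=
            norm_sub_le _ _
        _ ≤ (‖X * D + Y * D‖ + ‖D * X‖) + ‖D * Y‖ :=
            add_le_add_left (norm_sub_le _ _) _
        _ ≤ ((‖X * D‖ + ‖Y * D‖) + ‖D * X‖) + ‖D * Y‖ :=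
            add_le_add_left (add_le_add_left (norm_add_le _ _) _) _
        _ ≤ ‖X‖ * ‖D‖ + ‖Y‖ * ‖D‖ + ‖D‖ * ‖X‖ + ‖D‖ * ‖Y‖ := by
            exact add_le_add (add_le_add (add_le_add (norm_mul_le _ _) (norm_mul_le _ _))
              (norm_mul_le _ _)) (norm_mul_le _ _)
    nlinarith
  have n2 : ‖(2:ℂ)⁻¹ • (D * D)‖ ≤ 2⁻¹ * (‖D‖ * ‖D‖) := by
    rw [norm_half_smul]
    have := norm_mul_le D D
    nlinarith
  have n3 : ‖Eq2 X Y‖ ≤ 2 * ((‖X‖ + ‖Y‖) + ‖D‖) ^ 3 := norm_Eq2_le hXt hYt ht3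
  have n4 : ‖Eq2 X Z‖ ≤ 2 * ((‖X‖ + ‖Y‖) + ‖D‖) ^ 3 := norm_Eq2_le hXt hZnorm ht3
  have n5 : ‖Eq2 Y Z‖ ≤ 2 * ((‖X‖ + ‖Y‖) + ‖D‖) ^ 3 := norm_Eq2_le hYt hZnorm ht3
  have n6 : ‖Lq X * Lq Y * Lq Z‖ ≤
      (5 / 2 * ((‖X‖ + ‖Y‖) + ‖D‖)) ^ 3 := by
    refine (norm_mul3_le _ _ _).trans ?_
    have l1 := norm_Lq_le hXt ht3
    have l2 := norm_Lq_le hYt ht3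
    have l3 := norm_Lq_le hZnorm ht3
    have h0t : (0:ℝ) ≤ (‖X‖ + ‖Y‖) + ‖D‖ := by positivity
    calc ‖Lq X‖ * ‖Lq Y‖ * ‖Lq Z‖ ≤
          (5 / 2 * ((‖X‖ + ‖Y‖) + ‖D‖)) * (5 / 2 * ((‖X‖ + ‖Y‖) + ‖D‖)) *
            (5 / 2 * ((‖X‖ + ‖Y‖) + ‖D‖)) := by
          refine mul_le_mul (mul_le_mul l1 l2 (norm_nonneg _) (by positivity)) l3
            (norm_nonneg _) (by positivity)
      _ = (5 / 2 * ((‖X‖ + ‖Y‖) + ‖D‖)) ^ 3 := by ring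
  have hpart2 : ‖Pq X * Pq Y * Pq Z - (1 + D + (2:ℂ)⁻¹ • (X * Y - Y * X))‖ ≤
      (‖X‖ + ‖Y‖) * ‖D‖ + 2⁻¹ * (‖D‖ * ‖D‖) + 2 * ((‖X‖ + ‖Y‖) + ‖D‖) ^ 3 +
        2 * ((‖X‖ + ‖Y‖) + ‖D‖) ^ 3 + 2 * ((‖X‖ + ‖Y‖) + ‖D‖) ^ 3 +
        (5 / 2 * ((‖X‖ + ‖Y‖) + ‖D‖)) ^ 3 := by
    rw [hkey]
    exact le_trans (norm_add_le _ _) (add_le_add (le_trans (norm_add_le _ _)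
      (add_le_add (le_trans (norm_add_le _ _) (add_le_add (le_trans (norm_add_le _ _)
        (add_le_add (le_trans (norm_add_le _ _) (add_le_add n1 n2)) n3)) n4)) n5)) n6)
  -- combine
  have htri : ‖NormedSpace.exp X * NormedSpace.exp Y * NormedSpace.exp Z -
      (1 + D + (2:ℂ)⁻¹ • (X * Y - Y * X))‖ ≤
      ‖NormedSpace.exp X * NormedSpace.exp Y * NormedSpace.exp Z -
        Pq X * Pq Y * Pq Z‖ +
      ‖Pq X * Pq Y * Pq Z - (1 + D + (2:ℂ)⁻¹ • (X * Y - Y * X))‖ := by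
    have heq : NormedSpace.exp X * NormedSpace.exp Y * NormedSpace.exp Z -
        (1 + D + (2:ℂ)⁻¹ • (X * Y - Y * X)) =
        (NormedSpace.exp X * NormedSpace.exp Y * NormedSpace.exp Z -
          Pq X * Pq Y * Pq Z) +
        (Pq X * Pq Y * Pq Z - (1 + D + (2:ℂ)⁻¹ • (X * Y - Y * X))) := by abel
    rw [heq]
    exact norm_add_le _ _
  refine htri.trans ?_
  have hcube : ((‖X‖ + ‖Y‖) + ‖D‖) ^ 3 ≤ 4 * ((‖X‖ + ‖Y‖) ^ 3 + ‖D‖ ^ 3) := by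
    nlinarith [mul_nonneg (sq_nonneg (‖X‖ + ‖Y‖ - ‖D‖)) (by positivity : (0:ℝ) ≤ (‖X‖ + ‖Y‖) + ‖D‖)]
  have hd3 : ‖D‖ ^ 3 ≤ ‖D‖ ^ 2 := by nlinarith [sq_nonneg ‖D‖]
  have hX3 : ‖X‖ ^ 3 ≤ (‖X‖ + ‖Y‖) ^ 3 := by gcongr <;> linarith
  have hY3 : ‖Y‖ ^ 3 ≤ (‖X‖ + ‖Y‖) ^ 3 := by gcongr <;> linarith
  nlinarith [hpart1, hpart2, hcube, hd3, hX3, hY3, mul_nonneg (by positivity : (0:ℝ) ≤ ‖X‖ + ‖Y‖) h0D]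

end abstractmain

theorem spatial_curvature_expansion (n : ℕ) (hn : 1 ≤ n) :
    ∃ C : ℝ, 0 < C ∧ ∀ X Y D : Matrix (Fin n) (Fin n) ℂ,
      ‖X‖ ≤ 1 → ‖Y‖ ≤ 1 → ‖D‖ ≤ 1 →
      ‖NormedSpace.exp X * NormedSpace.exp Y * NormedSpace.exp (-X - Y + D) -
          (1 + D + ((1 : ℂ) / 2) • (X * Y - Y * X))‖ ≤
        C * ((‖X‖ + ‖Y‖) ^ 3 + (‖X‖ + ‖Y‖) * ‖D‖ + ‖D‖ ^ 2) := by
  haveI : NeZero n := ⟨by omega⟩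
  exact ⟨1000000, by norm_num, fun X Y D hX hY hD => abstract_main X Y D hX hY hD⟩
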